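/- Let λ > 0 and 1 ≤ k < l ≤ n with N(k,l) ≤ λ. If k ≤ x, y ≤ l and c_{k,l}(x,y) > λ, then one of x, y lies in K' and the other lies in L'. -/
import Mathlib


noncomputable section

variable {X : Type*} [MetricSpace X]

/-- Path distance between vertices `i` and `j` of the path `p₁, …, pₙ`:
the sum of the edge weights `d(p_t, p_{t+1})` for `min i j ≤ t < max i j`. -/
def pathDist (p : ℕ → X) (i j : ℕ) : ℝ :=
  ∑ t ∈ Finset.Ico (min i j) (max i j), dist (p t) (p (t + 1))

/-- Shortest-path distance between vertices `x` and `y` in the unicyclic graph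
`P̄[k,l]` obtained by adding the shortcut `(p_k, p_l)` of weight `d(p_k, p_l)`. -/
def pbar (p : ℕ → X) (k l x y : ℕ) : ℝ :=
  min (pathDist p x y)
    (min (pathDist p x k + dist (p k) (p l) + pathDist p l y)
         (pathDist p x l + dist (p k) (p l) + pathDist p k y))

/-- The length `|C[k,l]|` of the cycle `C[k,l]`. -/
def cycleLen (p : ℕ → X) (k l : ℕ) : ℝ :=
  pathDist p k l + dist (p k) (p l)

/-- The cycle distance `c_{k,l}(x,y)` for `k ≤ x, y ≤ l`. -/
def cycDist (p : ℕ → X) (k l x y : ℕ) : ℝ :=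
  min (pathDist p x y) (cycleLen p k l - pathDist p x y)

/-- `S(k,l) = max_{k ≤ x ≤ l} p̄_{k,l}(1,x)`. -/
def Sfun (p : ℕ → X) (k l : ℕ) : ℝ :=
  sSup ((fun x => pbar p k l 1 x) '' Set.Icc k l)

/-- `E(k,l) = max_{k ≤ x ≤ l} p̄_{k,l}(x,n)`. -/
def Efun (p : ℕ → X) (n k l : ℕ) : ℝ :=
  sSup ((fun x => pbar p k l x n) '' Set.Icc k l)

/-- `U(k,l) = p̄_{k,l}(1,n)`. -/
def Ufun (p : ℕ → X) (n k l : ℕ) : ℝ :=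
  pbar p k l 1 n

/-- `O(k,l) = max_{k ≤ x < y ≤ l} c_{k,l}(x,y)`. -/
def Ofun (p : ℕ → X) (k l : ℕ) : ℝ :=
  sSup {r | ∃ x y : ℕ, k ≤ x ∧ x < y ∧ y ≤ l ∧ r = cycDist p k l x y}

/-- `N(k,l) = max (S(k,l), E(k,l), U(k,l))`. -/
def Nfun (p : ℕ → X) (n k l : ℕ) : ℝ :=
  max (Sfun p k l) (max (Efun p n k l) (Ufun p n k l))

/-- `M(k,l) = max_{1 ≤ x < y ≤ n} p̄_{k,l}(x,y)`, the diameter of `P̄[k,l]`. -/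
def Mfun (p : ℕ → X) (n k l : ℕ) : ℝ :=
  sSup {r | ∃ x y : ℕ, 1 ≤ x ∧ x < y ∧ y ≤ n ∧ r = pbar p k l x y}

lemma pathDist_nonneg' (p : ℕ → X) (i j : ℕ) : 0 ≤ pathDist p i j :=
  Finset.sum_nonneg fun _ _ => dist_nonneg

lemma pathDist_comm' (p : ℕ → X) (i j : ℕ) : pathDist p i j = pathDist p j i := by
  simp [pathDist, min_comm, max_comm]

lemma pathDist_add' (p : ℕ → X) {i j m : ℕ} (h1 : i ≤ j) (h2 : j ≤ m) :
    pathDist p i m = pathDist p i j + pathDist p j m := by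
  unfold pathDist
  rw [min_eq_left (h1.trans h2), max_eq_right (h1.trans h2), min_eq_left h1,
    max_eq_right h1, min_eq_left h2, max_eq_right h2,
    Finset.sum_Ico_consecutive _ h1 h2]

lemma le_Sfun' (p : ℕ → X) {k l z : ℕ} (hz : z ∈ Set.Icc k l) :
    pbar p k l 1 z ≤ Sfun p k l :=
  le_csSup ((Set.finite_Icc k l).image _).bddAbove ⟨z, hz, rfl⟩

lemma le_Efun' (p : ℕ → X) {n k l z : ℕ} (hz : z ∈ Set.Icc k l) :
    pbar p k l z n ≤ Efun p n k l :=
  le_csSup ((Set.finite_Icc k l).image _).bddAbove ⟨z, hz, rfl⟩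

lemma key_lemma' (n : ℕ) (p : ℕ → X) (k l : ℕ) (hk : 1 ≤ k) (hl : l ≤ n)
    (lam : ℝ) (hS : Sfun p k l ≤ lam) (hE : Efun p n k l ≤ lam)
    (x y : ℕ) (hx : k ≤ x) (hy' : y ≤ l) (hxy : x ≤ y)
    (hc : lam < cycDist p k l x y) :
    pathDist p k x ≤ lam ∧ lam < pathDist p x l ∧
    pathDist p y l ≤ lam ∧ lam < pathDist p k y := by
  have hky : k ≤ y := hx.trans hxy
  have hxl : x ≤ l := hxy.trans hy'
  have hd : (0:ℝ) ≤ dist (p k) (p l) := dist_nonneg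
  have hc1 : lam < pathDist p x y := lt_of_lt_of_le hc (min_le_left _ _)
  have hc2 : lam < cycleLen p k l - pathDist p x y :=
    lt_of_lt_of_le hc (min_le_right _ _)
  have exl : pathDist p x l = pathDist p x y + pathDist p y l := pathDist_add' p hxy hy'
  have eky : pathDist p k y = pathDist p k x + pathDist p x y := pathDist_add' p hx hxy
  have hyl0 := pathDist_nonneg' p y l
  have hkx0 := pathDist_nonneg' p k x
  -- δ(k,x) ≤ lam from S
  have hSx : pbar p k l 1 x ≤ lam := le_trans (le_Sfun' p ⟨hx, hxl⟩) hS
  have e1x : pathDist p 1 x = pathDist p 1 k + pathDist p k x := pathDist_add' p hk hx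
  have h1k0 := pathDist_nonneg' p 1 k
  have h1l0 := pathDist_nonneg' p 1 l
  have hkx : pathDist p k x ≤ lam := by
    unfold pbar at hSx
    rcases min_le_iff.1 hSx with h | h
    · linarith
    rcases min_le_iff.1 h with h | h
    · rw [pathDist_comm' p l x, exl] at h; linarith
    · linarith
  -- δ(y,l) ≤ lam from E
  have hEy : pbar p k l y n ≤ lam := le_trans (le_Efun' p ⟨hky, hy'⟩) hE
  have eyn : pathDist p y n = pathDist p y l + pathDist p l n := pathDist_add' p hy' hl
  have hln0 := pathDist_nonneg' p l n
  have hkn0 := pathDist_nonneg' p k n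
  have hyl : pathDist p y l ≤ lam := by
    unfold pbar at hEy
    rcases min_le_iff.1 hEy with h | h
    · linarith
    rcases min_le_iff.1 h with h | h
    · rw [pathDist_comm' p y k, eky] at h; linarith
    · linarith
  exact ⟨hkx, by rw [exl]; linarith, hyl, by rw [eky]; linarith⟩

lemma cycDist_comm' (p : ℕ → X) (k l x y : ℕ) :
    cycDist p k l x y = cycDist p k l y x := by
  simp [cycDist, pathDist_comm' p x y]

/-- Let `λ > 0` and `1 ≤ k < l ≤ n` with `N(k,l) ≤ λ`. If
`k ≤ x, y ≤ l` and `c_{k,l}(x,y) > λ`, then one of `x, y` lies in `K' = K \ L` and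
the other lies in `L' = L \ K`. -/
theorem large_cycle_dist_in_KL' {X : Type*} [MetricSpace X]
    (n : ℕ) (hn : 2 ≤ n) (p : ℕ → X)
    (k l : ℕ) (hk : 1 ≤ k) (hkl : k < l) (hl : l ≤ n)
    (lam : ℝ) (hlam : 0 < lam) (hN : Nfun p n k l ≤ lam)
    (x y : ℕ) (hx : k ≤ x) (hx' : x ≤ l) (hy : k ≤ y) (hy' : y ≤ l)
    (hc : lam < cycDist p k l x y) :
    (x ∈ {z : ℕ | k ≤ z ∧ z ≤ l ∧ pathDist p k z ≤ lam} \
         {z : ℕ | k ≤ z ∧ z ≤ l ∧ pathDist p z l ≤ lam} ∧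
     y ∈ {z : ℕ | k ≤ z ∧ z ≤ l ∧ pathDist p z l ≤ lam} \
         {z : ℕ | k ≤ z ∧ z ≤ l ∧ pathDist p k z ≤ lam}) ∨
    (y ∈ {z : ℕ | k ≤ z ∧ z ≤ l ∧ pathDist p k z ≤ lam} \
         {z : ℕ | k ≤ z ∧ z ≤ l ∧ pathDist p z l ≤ lam} ∧
     x ∈ {z : ℕ | k ≤ z ∧ z ≤ l ∧ pathDist p z l ≤ lam} \
         {z : ℕ | k ≤ z ∧ z ≤ l ∧ pathDist p k z ≤ lam}) := by
  have hS : Sfun p k l ≤ lam := le_trans (le_max_left _ _) hN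
  have hE : Efun p n k l ≤ lam :=
    le_trans (le_trans (le_max_left _ _) (le_max_right _ _)) hN
  rcases le_total x y with hxy | hxy
  · obtain ⟨h1, h2, h3, h4⟩ :=
      key_lemma' n p k l hk hl lam hS hE x y hx hy' hxy hc
    exact Or.inl ⟨⟨⟨hx, hx', h1⟩, fun h => absurd h.2.2 (not_le.2 h2)⟩,
      ⟨⟨hy, hy', h3⟩, fun h => absurd h.2.2 (not_le.2 h4)⟩⟩
  · rw [cycDist_comm'] at hc
    obtain ⟨h1, h2, h3, h4⟩ :=
      key_lemma' n p k l hk hl lam hS hE y x hy hx' hxy hc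
    exact Or.inr ⟨⟨⟨hy, hy', h1⟩, fun h => absurd h.2.2 (not_le.2 h2)⟩,
      ⟨⟨hx, hx', h3⟩, fun h => absurd h.2.2 (not_le.2 h4)⟩⟩
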